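/- arXiv:1603.03850 — 2 statements merged into one kernel-verified Lean document; each statement's English description precedes it below -/
import Mathlib

section
/- Let R be a ring, let 𝒜 be a class of left R-modules closed under isomorphisms and under arbitrary direct sums, and let ℬ be a class of left R-modules closed under isomorphisms and under direct summands. Then the following are equivalent: (1) for every acyclic (exact) unbounded complex X of left R-modules all of whose components X_n belong to 𝒜, every cycle module Z_n(X) belongs to ℬ; (2) every 𝒜-periodic module belongs to ℬ. -/
open CategoryTheory

universe u

namespace TotallyAcyclicPaper

/-- An unbounded chain complex of left `R`-modules. -/
abbrev Cx (R : Type u) [Ring R] := ChainComplex (ModuleCat.{u} R) ℤ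

/-- A complex is acyclic (exact) if it is exact at every degree. -/
def Acyclic (R : Type u) [Ring R] (C : Cx R) : Prop :=
  ∀ (n : ℤ) (x : C.X n), C.d n (n - 1) x = 0 → ∃ y : C.X (n + 1), C.d (n + 1) n y = x

/-- The `n`-th cycle submodule `Z_n(C) = ker (d_n : C_n → C_{n-1})`. -/
def cycles (R : Type u) [Ring R] (C : Cx R) (n : ℤ) : Submodule R (C.X n) :=
  LinearMap.ker (C.d n (n - 1)).hom

/-- A module `M` is `𝒜`-periodic if there is a short exact sequence `0 → M → A → M → 0`
with `A ∈ 𝒜`. -/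
def IsPeriodic (R : Type u) [Ring R]
    (𝒜 : (M : Type u) → [AddCommGroup M] → [Module R M] → Prop)
    (M : Type u) [AddCommGroup M] [Module R M] : Prop :=
  ∃ (A : ModuleCat.{u} R) (i : M →ₗ[R] A) (p : A →ₗ[R] M),
    𝒜 A ∧ Function.Injective i ∧ Function.Surjective p ∧
      LinearMap.ker p = LinearMap.range i

section Aux

variable {R : Type u} [Ring R]

/-- The "periodic" complex `... → A → A → A → ...` with differential `dm`. -/
noncomputable def per (A : ModuleCat.{u} R) (dm : A →ₗ[R] A) (hd : ∀ x, dm (dm x) = 0) :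
    Cx R where
  X := fun _ => A
  d := fun i j => if j + 1 = i then ModuleCat.ofHom dm else 0
  shape := fun i j h => if_neg h
  d_comp_d' := fun i j k hij hjk => by
    simp only [ComplexShape.down_Rel] at hij hjk
    rw [if_pos hjk, if_pos hij]
    ext x
    exact hd x

lemma per_d (A : ModuleCat.{u} R) (dm : A →ₗ[R] A) (hd : ∀ x, dm (dm x) = 0)
    {i j : ℤ} (h : j + 1 = i) : (per A dm hd).d i j = ModuleCat.ofHom dm := by
  show (if j + 1 = i then ModuleCat.ofHom dm else 0) = ModuleCat.ofHom dm
  rw [if_pos h]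

lemma d_mem_cycles (C : Cx R) (n : ℤ) (x : C.X n) :
    C.d n (n - 1) x ∈ cycles R C (n - 1) := by
  simp only [cycles, LinearMap.mem_ker]
  change (C.d n (n - 1) ≫ C.d (n - 1) (n - 1 - 1)).hom x = 0
  rw [C.d_comp_d]
  rfl

/-- The corestriction of the differential to cycles. -/
noncomputable def gmap (C : Cx R) (n : ℤ) : C.X n →ₗ[R] cycles R C (n - 1) :=
  LinearMap.codRestrict (cycles R C (n - 1)) (C.d n (n - 1)).hom (d_mem_cycles C n)

lemma gmap_surjective (C : Cx R) (hC : Acyclic R C) (n : ℤ) :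
    Function.Surjective (gmap C n) := by
  rintro ⟨z, hz⟩
  obtain ⟨y, hy⟩ := hC (n - 1) z hz
  refine ⟨(C.XIsoOfEq (show n - 1 + 1 = n by ring)).hom y, ?_⟩
  apply Subtype.ext
  show C.d n (n - 1) ((C.XIsoOfEq (show n - 1 + 1 = n by ring)).hom y) = z
  have hc := C.XIsoOfEq_hom_comp_d (show n - 1 + 1 = n by ring) (n - 1)
  have := congrArg (fun f : C.X (n - 1 + 1) ⟶ C.X (n - 1) => f.hom y) hc
  simp only [ModuleCat.hom_comp, LinearMap.comp_apply] at this
  exact this.trans hy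

lemma ker_gmap (C : Cx R) (n : ℤ) :
    LinearMap.ker (gmap C n) = LinearMap.range (cycles R C n).subtype := by
  rw [gmap, LinearMap.ker_codRestrict, Submodule.range_subtype]
  rfl

lemma mapRange_apply' {ι : Type u} [DecidableEq ι] {M N : ι → Type u}
    [∀ i, AddCommGroup (M i)] [∀ i, Module R (M i)]
    [∀ i, AddCommGroup (N i)] [∀ i, Module R (N i)]
    (f : ∀ i, M i →ₗ[R] N i) (x : DirectSum ι M) (i : ι) :
    DFinsupp.mapRange.linearMap f x i = f i (x i) := by
  simp [DFinsupp.mapRange.linearMap]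
  rfl

lemma mapRange_lof {ι : Type u} [DecidableEq ι] (M N : ι → Type u)
    [∀ i, AddCommGroup (M i)] [∀ i, Module R (M i)]
    [∀ i, AddCommGroup (N i)] [∀ i, Module R (N i)]
    (f : ∀ i, M i →ₗ[R] N i) (i : ι) (b : M i) :
    DFinsupp.mapRange.linearMap f (DirectSum.lof R ι M i b) = DirectSum.lof R ι N i (f i b) := by
  simp only [DFinsupp.mapRange.linearMap, DirectSum.lof, LinearMap.coe_mk, AddHom.coe_mk,
    DFinsupp.lsingle_apply]
  exact DFinsupp.mapRange_single (hf := fun i => map_zero (f i))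

variable (C : Cx R)

/-- The family of cycle modules, indexed by `ULift ℤ`. -/
abbrev Zfam : ULift.{u} ℤ → Type u := fun n => ↥(cycles R C n.down)

/-- The family of components, indexed by `ULift ℤ`. -/
abbrev Xfam : ULift.{u} ℤ → Type u := fun n => ↑(C.X n.down)

/-- The shifted family of cycle modules. -/
abbrev Zfam' : ULift.{u} ℤ → Type u := fun n => ↥(cycles R C (n.down - 1))

/-- The inclusion of the direct sum of cycles into the direct sum of components. -/
noncomputable def bigi : DirectSum (ULift.{u} ℤ) (Zfam C) →ₗ[R] DirectSum (ULift.{u} ℤ) (Xfam C) :=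
  DFinsupp.mapRange.linearMap (fun n => (cycles R C n.down).subtype)

/-- The projection of the direct sum of components onto the (shifted) direct sum of cycles. -/
noncomputable def bigp0 :
    DirectSum (ULift.{u} ℤ) (Xfam C) →ₗ[R] DirectSum (ULift.{u} ℤ) (Zfam' C) :=
  DFinsupp.mapRange.linearMap (fun n => gmap C n.down)

lemma bigi_apply (x : DirectSum (ULift.{u} ℤ) (Zfam C)) (k : ULift.{u} ℤ) :
    bigi C x k = ((x k : Zfam C k) : C.X k.down) :=
  mapRange_apply' _ x k

lemma bigp0_apply (x : DirectSum (ULift.{u} ℤ) (Xfam C)) (k : ULift.{u} ℤ) :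
    bigp0 C x k = gmap C k.down (x k) :=
  mapRange_apply' _ x k

lemma bigi_injective' : Function.Injective (bigi C) := by
  intro x y hxy
  refine DFinsupp.ext fun k => ?_
  have h : bigi C x k = bigi C y k := by rw [hxy]
  rw [bigi_apply, bigi_apply] at h
  exact Subtype.ext h

lemma bigp0_surjective (hC : Acyclic R C) : Function.Surjective (bigp0 C) := by
  intro y
  induction y using DFinsupp.induction with
  | h0 => exact ⟨0, map_zero _⟩
  | ha k b rest _ _ ih =>
    obtain ⟨x, hx⟩ := ih
    obtain ⟨a, ha⟩ := gmap_surjective C hC k.down b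
    refine ⟨DirectSum.lof R (ULift.{u} ℤ) (Xfam C) k a + x, ?_⟩
    have h1 : bigp0 C (DirectSum.lof R (ULift.{u} ℤ) (Xfam C) k a)
        = DirectSum.lof R (ULift.{u} ℤ) (Zfam' C) k (gmap C k.down a) :=
      mapRange_lof (Xfam C) (Zfam' C) (fun n => gmap C n.down) k a
    rw [map_add, hx, h1, ha]
    rfl

lemma ker_bigp0 : LinearMap.ker (bigp0 C) = LinearMap.range (bigi C) := by
  ext x
  simp only [LinearMap.mem_ker, LinearMap.mem_range]
  constructor
  · intro hx
    have hmem : ∀ k : ULift.{u} ℤ, (x k : C.X k.down) ∈ cycles R C k.down := by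
      intro k
      have h : bigp0 C x k = 0 := by rw [hx]; rfl
      rw [bigp0_apply] at h
      have h3 : C.d k.down (k.down - 1) (x k) = 0 := congrArg Subtype.val h
      exact h3
    classical
    refine ⟨DFinsupp.mk x.support (fun k => ⟨x k.1, hmem k.1⟩), ?_⟩
    refine DFinsupp.ext fun k => ?_
    rw [bigi_apply]
    by_cases hk : k ∈ x.support
    · rw [DFinsupp.mk_apply, dif_pos hk]
    · rw [DFinsupp.mk_apply, dif_neg hk]
      exact (DFinsupp.notMem_support_iff.mp hk).symm
  · rintro ⟨y, rfl⟩
    refine DFinsupp.ext fun k => ?_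
    rw [bigp0_apply, bigi_apply]
    apply Subtype.ext
    show C.d k.down (k.down - 1) ((y k : C.X k.down)) = 0
    exact (y k).2

/-- The shift `n ↦ n + 1` on `ULift ℤ`. -/
def shiftEquiv' : ULift.{u} ℤ ≃ ULift.{u} ℤ where
  toFun n := ⟨n.down + 1⟩
  invFun n := ⟨n.down - 1⟩
  left_inv n := congrArg ULift.up (by ring)
  right_inv n := congrArg ULift.up (by ring)

/-- Reindexing equivalence. -/
noncomputable def reEquiv : DirectSum (ULift.{u} ℤ) (Zfam' C) ≃ₗ[R] DirectSum (ULift.{u} ℤ) (Zfam C) :=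
  (DirectSum.lequivCongrLeft (M := Zfam C) R shiftEquiv').symm

/-- The projection onto the unshifted direct sum of cycles. -/
noncomputable def bigp : DirectSum (ULift.{u} ℤ) (Xfam C) →ₗ[R] DirectSum (ULift.{u} ℤ) (Zfam C) :=
  (reEquiv C).toLinearMap.comp (bigp0 C)

lemma bigp_surjective (hC : Acyclic R C) : Function.Surjective (bigp C) :=
  (reEquiv C).surjective.comp (bigp0_surjective C hC)

lemma ker_bigp : LinearMap.ker (bigp C) = LinearMap.range (bigi C) := by
  rw [bigp, LinearMap.ker_comp, LinearEquiv.ker, Submodule.comap_bot, ker_bigp0]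

end Aux

theorem statement0 (R : Type u) [Ring R]
    (𝒜 ℬ : (M : Type u) → [AddCommGroup M] → [Module R M] → Prop)
    (hAiso : ∀ (M N : Type u) [AddCommGroup M] [Module R M] [AddCommGroup N] [Module R N],
      (M ≃ₗ[R] N) → 𝒜 M → 𝒜 N)
    (hAsum : ∀ (ι : Type u) (M : ι → Type u) [∀ i, AddCommGroup (M i)]
      [∀ i, Module R (M i)], (∀ i, 𝒜 (M i)) → 𝒜 (DirectSum ι M))
    (hBiso : ∀ (M N : Type u) [AddCommGroup M] [Module R M] [AddCommGroup N] [Module R N],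
      (M ≃ₗ[R] N) → ℬ M → ℬ N)
    (hBsummand : ∀ (M N : Type u) [AddCommGroup M] [Module R M] [AddCommGroup N]
      [Module R N] (i : N →ₗ[R] M) (r : M →ₗ[R] N),
      (∀ x : N, r (i x) = x) → ℬ M → ℬ N) :
    (∀ C : Cx R, Acyclic R C → (∀ n : ℤ, 𝒜 (C.X n)) → ∀ n : ℤ, ℬ (cycles R C n)) ↔
      (∀ (M : Type u) [AddCommGroup M] [Module R M], IsPeriodic R 𝒜 M → ℬ M) := by
  classical
  constructor
  · -- (1) → (2)
    rintro h1 M _ _ ⟨A, im, pm, hA, hinj, hsurj, hker⟩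
    set dm : A →ₗ[R] A := im.comp pm with hdm
    have hpi : ∀ y : M, pm (im y) = 0 := by
      intro y
      have : im y ∈ LinearMap.ker pm := by
        rw [hker]; exact ⟨y, rfl⟩
      exact this
    have hd : ∀ x : A, dm (dm x) = 0 := by
      intro x
      show im (pm (im (pm x))) = 0
      rw [hpi, map_zero]
    set C : Cx R := per A dm hd with hCdef
    have hacyc : Acyclic R C := by
      intro n x hx
      rw [per_d A dm hd (by ring : n - 1 + 1 = n)] at hx
      have hpx : pm x = 0 := hinj (by rw [map_zero]; exact hx)
      have hxr : x ∈ LinearMap.range im := by rw [← hker]; exact hpx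
      obtain ⟨m, hm⟩ := hxr
      obtain ⟨y, hy⟩ := hsurj m
      refine ⟨y, ?_⟩
      rw [per_d A dm hd (by ring : n + 1 = n + 1)]
      show im (pm y) = x
      rw [hy, hm]
    have hcomp : ∀ n : ℤ, 𝒜 (C.X n) := fun n => hA
    have hcyc := h1 C hacyc hcomp 0
    have heq : (cycles R C 0 : Submodule R A) = LinearMap.range im := by
      unfold cycles
      rw [per_d A dm hd (by ring : (0 : ℤ) - 1 + 1 = 0)]
      change LinearMap.ker dm = _
      rw [hdm, LinearMap.ker_comp, LinearMap.ker_eq_bot.2 hinj, Submodule.comap_bot, hker]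
    have e2 := (LinearEquiv.ofInjective im hinj)
    have e1 := LinearEquiv.ofEq _ _ heq
    have hr : ℬ (LinearMap.range im) := hBiso _ _ e1 hcyc
    exact hBiso _ M e2.symm hr
  · -- (2) → (1)
    intro h2 C hC hCA n₀
    have hWper : IsPeriodic R 𝒜 (DirectSum (ULift.{u} ℤ) (Zfam C)) := by
      refine ⟨ModuleCat.of R (DirectSum (ULift.{u} ℤ) (Xfam C)), bigi C, bigp C, ?_,
        bigi_injective' C, bigp_surjective C hC, ker_bigp C⟩
      exact hAsum (ULift.{u} ℤ) (Xfam C) (fun n => hCA n.down)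
    have hBW : ℬ (DirectSum (ULift.{u} ℤ) (Zfam C)) := h2 _ hWper
    exact hBsummand (DirectSum (ULift.{u} ℤ) (Zfam C)) (↥(cycles R C n₀))
      (DirectSum.lof R (ULift.{u} ℤ) (Zfam C) ⟨n₀⟩)
      (DirectSum.component R (ULift.{u} ℤ) (Zfam C) ⟨n₀⟩)
      (fun x => DirectSum.component.lof_self (M := Zfam C) R (⟨n₀⟩ : ULift.{u} ℤ) x) hBW

end TotallyAcyclicPaper
end

section
/- Let R be a ring, and let 𝒜 ⊆ ℬ be classes of left R-modules closed under isomorphisms, where ℬ is closed under direct summands and extensions, both 𝒜 and ℬ are closed under arbitrary direct sums, and every module in ℬ occurs as a cycle of some acyclic complex all of whose components are in 𝒜. Then the following are equivalent: (1) the cycles of every acyclic complex with all components in 𝒜 belong to ℬ; (2) the cycles of every acyclic complex with all components in ℬ belong to ℬ; (3) every 𝒜-periodic module belongs to ℬ; (4) every ℬ-periodic module belongs to ℬ. -/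
open CategoryTheory

universe u

namespace TotallyAcyclicPaper

section Aux

open DirectSum

variable {R : Type u} [Ring R]

/-- Abbreviation for the class-of-modules type. -/
abbrev MClass (R : Type u) [Ring R] :=
  (M : Type u) → [AddCommGroup M] → [Module R M] → Prop

lemma ker_d_congr (C : Cx R) {i a b : ℤ} (h : a = b) :
    LinearMap.ker (C.d i a).hom = LinearMap.ker (C.d i b).hom := by subst h; rfl

lemma exists_d_eq (C : Cx R) {a b c : ℤ} (h : a = b) (x : C.X c)
    (hx : ∃ y : C.X a, C.d a c y = x) : ∃ y : C.X b, C.d b c y = x := by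
  subst h; exact hx

lemma cycles_eq_ker (C : Cx R) {n m : ℤ} (h : n = m + 1) :
    cycles R C n = LinearMap.ker (C.d n m).hom :=
  ker_d_congr C (by omega)

lemma d_d_zero (C : Cx R) (i j k : ℤ) (x : C.X i) : C.d j k (C.d i j x) = 0 := by
  exact LinearMap.congr_fun (congrArg ModuleCat.Hom.hom (C.d_comp_d i j k)) x

/-- The corestriction of the differential to cycles. -/
def dRes (C : Cx R) (n : ℤ) : C.X n →ₗ[R] cycles R C (n - 1) :=
  LinearMap.codRestrict (cycles R C (n - 1)) (C.d n (n - 1)).hom (fun x => by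
    show C.d (n - 1) (n - 1 - 1) (C.d n (n - 1) x) = 0
    exact d_d_zero C n (n - 1) (n - 1 - 1) x)

lemma dRes_surjective (C : Cx R) (hC : Acyclic R C) (n : ℤ) :
    Function.Surjective (dRes C n) := by
  rintro ⟨x, hx⟩
  obtain ⟨y, hy⟩ := exists_d_eq C (show n - 1 + 1 = n by omega) x (hC (n - 1) x (LinearMap.mem_ker.mp hx))
  exact ⟨y, Subtype.ext hy⟩

lemma ker_dRes (C : Cx R) (n : ℤ) : LinearMap.ker (dRes C n) = cycles R C n :=
  LinearMap.ker_codRestrict _ _ _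

/-- Cast of cycles along an equality of indices. -/
def cyclesCast (C : Cx R) {a b : ℤ} (h : a = b) :
    ↥(cycles R C a) ≃ₗ[R] ↥(cycles R C b) := by subst h; exact LinearEquiv.refl R _

/-- A short exact sequence of direct sums from componentwise short exact sequences. -/
lemma directSum_ses {ι : Type u} [DecidableEq ι] (S T U : ι → Type u)
    [∀ i, AddCommGroup (S i)] [∀ i, Module R (S i)]
    [∀ i, AddCommGroup (T i)] [∀ i, Module R (T i)]
    [∀ i, AddCommGroup (U i)] [∀ i, Module R (U i)]
    (f : ∀ i, S i →ₗ[R] T i) (g : ∀ i, T i →ₗ[R] U i)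
    (hf : ∀ i, Function.Injective (f i)) (hg : ∀ i, Function.Surjective (g i))
    (hk : ∀ i, LinearMap.ker (g i) = LinearMap.range (f i)) :
    ∃ (F : DirectSum ι S →ₗ[R] DirectSum ι T) (G : DirectSum ι T →ₗ[R] DirectSum ι U),
      Function.Injective F ∧ Function.Surjective G ∧
        LinearMap.ker G = LinearMap.range F := by
  classical
  refine ⟨DFinsupp.mapRange.linearMap f, DFinsupp.mapRange.linearMap g, ?_, ?_, ?_⟩
  · intro x y h
    refine DFunLike.ext _ _ fun i => hf i ?_
    have := congrArg (fun z => z i) h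
    exact this
  · intro u
    induction u using DirectSum.induction_on with
    | zero => exact ⟨0, map_zero _⟩
    | of i x =>
      obtain ⟨t, ht⟩ := hg i x
      refine ⟨DirectSum.of T i t, ?_⟩
      show DFinsupp.mapRange.linearMap g (DFinsupp.single i t) = DFinsupp.single i x
      rw [← ht]; exact DFinsupp.mapRange_single (hf := fun _ => map_zero _)
    | add a b ha hb =>
      obtain ⟨ta, hta⟩ := ha
      obtain ⟨tb, htb⟩ := hb
      exact ⟨ta + tb, by rw [map_add, hta, htb]⟩
  · ext x
    constructor
    · intro hx
      have hcomp : ∀ i, g i (x i) = 0 := by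
        intro i
        have := congrArg (fun z => z i) (LinearMap.mem_ker.mp hx)
        exact this
      rw [← DirectSum.sum_support_of x]
      apply Submodule.sum_mem
      intro i _
      have : x i ∈ LinearMap.range (f i) := by
        rw [← hk i]; exact LinearMap.mem_ker.mpr (hcomp i)
      obtain ⟨s, hs⟩ := this
      refine ⟨DirectSum.of S i s, ?_⟩
      show DFinsupp.mapRange.linearMap f (DFinsupp.single i s) = DFinsupp.single i (x i)
      rw [← hs]; exact DFinsupp.mapRange_single (hf := fun _ => map_zero _)
    · rintro ⟨v, rfl⟩
      rw [LinearMap.mem_ker]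
      refine DFunLike.ext _ _ fun i => ?_
      have : f i (v i) ∈ LinearMap.ker (g i) := by
        rw [hk i]; exact LinearMap.mem_range_self _ _
      exact LinearMap.mem_ker.mp this

variable {𝒜 ℬ : MClass R}

/-- Every `𝒞`-periodic module is a cycle of an acyclic complex with components
the middle term, via the constant complex. -/
lemma periodic_mem_of_cycles
    (hBiso : ∀ (M N : Type u) [AddCommGroup M] [Module R M] [AddCommGroup N] [Module R N],
      (M ≃ₗ[R] N) → ℬ M → ℬ N)
    (𝒞 : MClass R)
    (h1 : ∀ C : Cx R, Acyclic R C → (∀ n : ℤ, 𝒞 (C.X n)) → ∀ n : ℤ, ℬ (cycles R C n))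
    (M : Type u) [AddCommGroup M] [Module R M] (hM : IsPeriodic R 𝒞 M) : ℬ M := by
  obtain ⟨A, i, p, hA, hi, hp, hker⟩ := hM
  have hpi : ∀ x : M, p (i x) = 0 := fun x => by
    have : i x ∈ LinearMap.ker p := by rw [hker]; exact LinearMap.mem_range_self _ _
    exact LinearMap.mem_ker.mp this
  let d0 : A ⟶ A := ModuleCat.ofHom (i.comp p : ↥A →ₗ[R] ↥A)
  have hd0 : ∀ x : ↥A, d0 (d0 x) = 0 := fun x => by
    show i (p (i (p x))) = 0
    rw [hpi (p x), map_zero]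
  let Ccx : Cx R := ChainComplex.of (fun _ : ℤ => A) (fun _ => d0)
    (fun _ => by ext x; exact hd0 x)
  have hdn : ∀ n : ℤ, Ccx.d (n + 1) n = d0 := fun n => ChainComplex.of_d (fun _ : ℤ => A) (fun _ => d0) n
  have hacy : Acyclic R Ccx := by
    intro n x hx
    obtain ⟨m, rfl⟩ : ∃ m : ℤ, n = m + 1 := ⟨n - 1, by omega⟩
    rw [show m + 1 - 1 = m by omega] at hx
    rw [hdn m] at hx
    have hpx : p x = 0 := hi (by rw [map_zero]; exact hx)
    have : x ∈ LinearMap.range i := by rw [← hker]; exact LinearMap.mem_ker.mpr hpx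
    obtain ⟨z, hz⟩ := this
    obtain ⟨y, hy⟩ := hp z
    refine ⟨y, ?_⟩
    rw [hdn (m + 1)]
    show i (p y) = x
    rw [hy, hz]
  have hcyc0 : cycles R Ccx 0 = LinearMap.ker d0.hom := by
    rw [cycles_eq_ker Ccx (show (0 : ℤ) = -1 + 1 by omega),
      show (0 : ℤ) = -1 + 1 by omega, hdn (-1)]
  have hkerd0 : LinearMap.ker d0.hom = LinearMap.range i := by
    ext x
    constructor
    · intro hx
      have : p x = 0 := hi (by rw [map_zero]; exact LinearMap.mem_ker.mp hx)
      rw [← hker]; exact LinearMap.mem_ker.mpr this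
    · rintro ⟨z, rfl⟩
      exact LinearMap.mem_ker.mpr (by show i (p (i z)) = 0; rw [hpi z, map_zero])
  have e : M ≃ₗ[R] ↥(cycles R Ccx 0) :=
    (LinearEquiv.ofInjective i hi).trans
      (LinearEquiv.ofEq _ _ (by rw [hcyc0, hkerd0]))
  exact hBiso _ M e.symm (h1 Ccx hacy (fun n => hA) 0)

/-- The cycles of an acyclic complex whose components lie in `𝒞` lie in `ℬ`,
provided all `𝒞`-periodic modules lie in `ℬ`. -/
lemma cycles_mem_of_periodic
    (hBsummand : ∀ (M N : Type u) [AddCommGroup M] [Module R M] [AddCommGroup N]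
      [Module R N] (i : N →ₗ[R] M) (r : M →ₗ[R] N),
      (∀ x : N, r (i x) = x) → ℬ M → ℬ N)
    (𝒞 : MClass R)
    (hsum : ∀ (ι : Type u) (M : ι → Type u) [∀ i, AddCommGroup (M i)]
      [∀ i, Module R (M i)], (∀ i, 𝒞 (M i)) → 𝒞 (DirectSum ι M))
    (hper : ∀ (M : Type u) [AddCommGroup M] [Module R M], IsPeriodic R 𝒞 M → ℬ M)
    (C : Cx R) (hC : Acyclic R C) (hcomp : ∀ n : ℤ, 𝒞 (C.X n)) (n : ℤ) :
    ℬ (cycles R C n) := by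
  classical
  let ι : Type u := ULift.{u} ℤ
  let S : ι → Type u := fun i => ↥(cycles R C i.down)
  let T : ι → Type u := fun i => ↥(C.X i.down)
  let U : ι → Type u := fun i => ↥(cycles R C (i.down - 1))
  obtain ⟨F, G, hF, hG, hFG⟩ := directSum_ses S T U
    (fun i => (cycles R C i.down).subtype) (fun i => dRes C i.down)
    (fun i => Subtype.coe_injective) (fun i => dRes_surjective C hC i.down)
    (fun i => by
      show LinearMap.ker (dRes C i.down) = LinearMap.range (cycles R C i.down).subtype
      rw [ker_dRes, Submodule.range_subtype])
  -- reindexing equivalence ⊕U ≃ ⊕S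
  let τ : ι ≃ ι :=
    ⟨fun i => ⟨i.down - 1⟩, fun i => ⟨i.down + 1⟩,
      fun i => by cases i; simp, fun i => by cases i; simp⟩
  let χ : ∀ k : ι, U (τ.symm k) ≃ₗ[R] S k := fun k =>
    cyclesCast C (show k.down + 1 - 1 = k.down by omega)
  let e : DirectSum ι U ≃ₗ[R] DirectSum ι S :=
    (DirectSum.lequivCongrLeft R τ).trans (DFinsupp.mapRange.linearEquiv χ)
  have hperS : IsPeriodic R 𝒞 (DirectSum ι S) := by
    refine ⟨ModuleCat.of R (DirectSum ι T), F, e.toLinearMap.comp G, ?_, hF, ?_, ?_⟩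
    · exact hsum ι T (fun i => hcomp i.down)
    · exact e.surjective.comp hG
    · rw [← hFG]
      ext x
      simp [LinearMap.mem_ker, LinearMap.comp_apply,
        (map_eq_zero_iff _ e.injective : e (G x) = 0 ↔ G x = 0)]
  have hB : ℬ (DirectSum ι S) := hper _ hperS
  exact hBsummand (DirectSum ι S) ↥(cycles R C n)
    (DirectSum.lof R ι S ⟨n⟩) (DirectSum.component R ι S ⟨n⟩)
    (fun x => DirectSum.component.lof_self (ι := ι) (M := S) R ⟨n⟩ x) hB

end Aux

section BridgeAux

open DirectSum

variable {R : Type u} [Ring R] {𝒜 ℬ : MClass R}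

/-- Step S1: every module of `ℬ` embeds into a module of `𝒜` with cokernel in `ℬ`. -/
lemma embed_step
    (h1 : ∀ C : Cx R, Acyclic R C → (∀ n : ℤ, 𝒜 (C.X n)) → ∀ n : ℤ, ℬ (cycles R C n))
    (hcycle : ∀ (M : Type u) [AddCommGroup M] [Module R M], ℬ M →
      ∃ C : Cx R, Acyclic R C ∧ (∀ n : ℤ, 𝒜 (C.X n)) ∧
        ∃ n : ℤ, Nonempty (M ≃ₗ[R] cycles R C n))
    (P : Type u) [AddCommGroup P] [Module R P] (hP : ℬ P) :
    ∃ (A W : ModuleCat.{u} R) (a : P →ₗ[R] A) (w : A →ₗ[R] W),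
      𝒜 A ∧ ℬ W ∧ Function.Injective a ∧ Function.Surjective w ∧
        LinearMap.ker w = LinearMap.range a := by
  obtain ⟨C, hC, hcomp, n, ⟨eP⟩⟩ := hcycle P hP
  refine ⟨C.X n, ModuleCat.of R ↥(cycles R C (n - 1)),
    (cycles R C n).subtype ∘ₗ eP.toLinearMap, dRes C n,
    hcomp n, h1 C hC hcomp (n - 1), ?_, dRes_surjective C hC n, ?_⟩
  · intro x y hxy
    exact eP.injective (Subtype.coe_injective hxy)
  · rw [ker_dRes]
    ext x
    constructor
    · intro hx
      exact ⟨eP.symm ⟨x, hx⟩, by simp⟩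
    · rintro ⟨q, rfl⟩
      exact ((eP q).2 : _)

/-- Step S2: every module of `ℬ` is a quotient of a module of `𝒜` with kernel in `ℬ`. -/
lemma quot_step
    (h1 : ∀ C : Cx R, Acyclic R C → (∀ n : ℤ, 𝒜 (C.X n)) → ∀ n : ℤ, ℬ (cycles R C n))
    (hcycle : ∀ (M : Type u) [AddCommGroup M] [Module R M], ℬ M →
      ∃ C : Cx R, Acyclic R C ∧ (∀ n : ℤ, 𝒜 (C.X n)) ∧
        ∃ n : ℤ, Nonempty (M ≃ₗ[R] cycles R C n))
    (P : Type u) [AddCommGroup P] [Module R P] (hP : ℬ P) :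
    ∃ (A K : ModuleCat.{u} R) (k : K →ₗ[R] A) (q : A →ₗ[R] P),
      𝒜 A ∧ ℬ K ∧ Function.Injective k ∧ Function.Surjective q ∧
        LinearMap.ker q = LinearMap.range k := by
  obtain ⟨C, hC, hcomp, n, ⟨eP⟩⟩ := hcycle P hP
  let c : ↥(cycles R C (n + 1 - 1)) ≃ₗ[R] ↥(cycles R C n) := cyclesCast C (by omega)
  let q : ↥(C.X (n + 1)) →ₗ[R] P :=
    eP.symm.toLinearMap ∘ₗ (c.toLinearMap ∘ₗ dRes C (n + 1))
  refine ⟨C.X (n + 1), ModuleCat.of R ↥(cycles R C (n + 1)), (cycles R C (n + 1)).subtype,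
    q, hcomp (n + 1), h1 C hC hcomp (n + 1), Subtype.coe_injective, ?_, ?_⟩
  · exact eP.symm.surjective.comp (c.surjective.comp (dRes_surjective C hC (n + 1)))
  · show LinearMap.ker q = _
    rw [show q = eP.symm.toLinearMap ∘ₗ (c.toLinearMap ∘ₗ dRes C (n + 1)) from rfl,
      LinearEquiv.ker_comp, LinearEquiv.ker_comp, ker_dRes, Submodule.range_subtype]

variable (R 𝒜 ℬ) in
/-- A building block for right towers: an embedding of a `ℬ`-periodic module into a module of
`𝒜` with `ℬ`-periodic cokernel. -/
structure PeriodicRes (X : ModuleCat.{u} R) : Type (u + 1) where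
  A : ModuleCat.{u} R
  X' : ModuleCat.{u} R
  f : ↥X →ₗ[R] ↥A
  g : ↥A →ₗ[R] ↥X'
  hA : 𝒜 A
  hf : Function.Injective f
  hg : Function.Surjective g
  hker : LinearMap.ker g = LinearMap.range f
  hper : IsPeriodic R ℬ ↥X'

variable (R 𝒜 ℬ) in
/-- A building block for left towers: a presentation of a `ℬ`-periodic module as a quotient of a
module of `𝒜` with `ℬ`-periodic kernel. -/
structure PeriodicCores (X : ModuleCat.{u} R) : Type (u + 1) where
  A : ModuleCat.{u} R
  Y' : ModuleCat.{u} R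
  f : ↥Y' →ₗ[R] ↥A
  g : ↥A →ₗ[R] ↥X
  hA : 𝒜 A
  hf : Function.Injective f
  hg : Function.Surjective g
  hker : LinearMap.ker g = LinearMap.range f
  hper : IsPeriodic R ℬ ↥Y'

/-- Step S3: pushout step producing a `ℬ`-periodic cokernel. -/
lemma periodic_embed_step
    (hAB : ∀ (M : Type u) [AddCommGroup M] [Module R M], 𝒜 M → ℬ M)
    (hBext : ∀ (A B C : Type u) [AddCommGroup A] [Module R A] [AddCommGroup B] [Module R B]
      [AddCommGroup C] [Module R C] (i : A →ₗ[R] B) (p : B →ₗ[R] C),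
      Function.Injective i → Function.Surjective p →
      LinearMap.ker p = LinearMap.range i → ℬ A → ℬ C → ℬ B)
    (h1 : ∀ C : Cx R, Acyclic R C → (∀ n : ℤ, 𝒜 (C.X n)) → ∀ n : ℤ, ℬ (cycles R C n))
    (hcycle : ∀ (M : Type u) [AddCommGroup M] [Module R M], ℬ M →
      ∃ C : Cx R, Acyclic R C ∧ (∀ n : ℤ, 𝒜 (C.X n)) ∧
        ∃ n : ℤ, Nonempty (M ≃ₗ[R] cycles R C n))
    (X : ModuleCat.{u} R) (hX : IsPeriodic R ℬ ↥X) :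
    Nonempty (PeriodicRes R 𝒜 ℬ X) := by
  obtain ⟨P, i, p, hP, hi, hp, hker⟩ := hX
  obtain ⟨A, W, a, w, hA, hW, ha, hw, hkw⟩ := embed_step h1 hcycle ↥P hP
  let j : ↥X →ₗ[R] ↥A := a ∘ₗ i
  have hj : Function.Injective j := fun x y hxy => hi (ha hxy)
  let Jr : Submodule R ↥A := LinearMap.range j
  let X'T := (↥A ⧸ Jr)
  let lam : ↥P →ₗ[R] X'T := Jr.mkQ ∘ₗ a
  have hkerlam : LinearMap.ker lam = LinearMap.ker p := by
    ext y
    have h0 : (Jr.mkQ (a y) = 0) ↔ a y ∈ Jr := by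
      rw [Submodule.mkQ_apply, Submodule.Quotient.mk_eq_zero]
    show Jr.mkQ (a y) = 0 ↔ p y = 0
    rw [h0]
    constructor
    · rintro ⟨x, hx⟩
      have hxy : i x = y := ha hx
      have hy : y ∈ LinearMap.range i := ⟨x, hxy⟩
      rw [← hker] at hy
      exact hy
    · intro h
      have hy : y ∈ LinearMap.range i := by rw [← hker]; exact LinearMap.mem_ker.mpr h
      obtain ⟨x, hxy⟩ := hy
      exact ⟨x, by show a (i x) = a y; rw [hxy]⟩
  let eP : (↥P ⧸ LinearMap.ker p) ≃ₗ[R] ↥X := p.quotKerEquivOfSurjective hp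
  have heP : ∀ y : ↥P, eP (Submodule.Quotient.mk y) = p y := fun y => rfl
  let μ : ↥X →ₗ[R] X'T :=
    (Submodule.liftQ (LinearMap.ker p) lam (le_of_eq hkerlam.symm)) ∘ₗ eP.symm.toLinearMap
  have hμ : ∀ y : ↥P, μ (p y) = lam y := fun y => by
    have h1' : eP.symm (p y) = Submodule.Quotient.mk y := by
      apply eP.injective; rw [LinearEquiv.apply_symm_apply, heP]
    have h2' : μ (p y) =
        (LinearMap.ker p).liftQ lam (le_of_eq hkerlam.symm) (eP.symm (p y)) := rfl
    rw [h2', h1', Submodule.liftQ_apply]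
  have hμinj : Function.Injective μ := by
    intro x₁ x₂ hx
    obtain ⟨y₁, rfl⟩ := hp x₁
    obtain ⟨y₂, rfl⟩ := hp x₂
    rw [hμ, hμ] at hx
    have hy : y₁ - y₂ ∈ LinearMap.ker lam := by
      rw [LinearMap.mem_ker, map_sub, hx, sub_self]
    rw [hkerlam, LinearMap.mem_ker, map_sub, sub_eq_zero] at hy
    exact hy
  -- the pushout
  let Sm : Submodule R (↥A × X'T) := LinearMap.range (LinearMap.prod j (-μ))
  let P' := (↥A × X'T) ⧸ Sm
  let α : X'T →ₗ[R] P' := Sm.mkQ ∘ₗ LinearMap.inr R ↥A X'T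
  have hα : ∀ u : X'T, α u = Submodule.Quotient.mk ((0 : ↥A), u) := fun u => rfl
  let β : P' →ₗ[R] X'T := Submodule.liftQ Sm (Jr.mkQ ∘ₗ LinearMap.fst R ↥A X'T)
    (by
      rintro ⟨v, u⟩ hvu
      obtain ⟨x, hx⟩ := hvu
      have hv : j x = v := congrArg Prod.fst hx
      show Jr.mkQ v = 0
      rw [Submodule.mkQ_apply, Submodule.Quotient.mk_eq_zero, ← hv]
      exact ⟨x, rfl⟩)
  have hβ : ∀ (v : ↥A) (u : X'T),
      β (Submodule.Quotient.mk (v, u)) = Jr.mkQ v := fun v u => rfl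
  have hαinj : Function.Injective α := by
    intro u₁ u₂ h
    have hd : ((0 : ↥A), u₁) - ((0 : ↥A), u₂) ∈ Sm := by
      rw [← Submodule.Quotient.eq, ← hα, ← hα]; exact h
    obtain ⟨x, hx⟩ := hd
    have h1' : j x = 0 := by
      have := congrArg Prod.fst hx
      simpa using this
    have hx0 : x = 0 := hj (by rw [h1', map_zero])
    have := congrArg Prod.snd hx
    simp only [hx0, map_zero, neg_zero, LinearMap.prod_apply, Pi.prod] at this
    have h2 : (0 : X'T) = u₁ - u₂ := by simpa using this
    rw [eq_comm, sub_eq_zero] at h2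
    exact h2
  have hβsurj : Function.Surjective β := by
    intro u
    obtain ⟨v, rfl⟩ := Submodule.Quotient.mk_surjective Jr u
    exact ⟨Submodule.Quotient.mk (v, (0 : X'T)), rfl⟩
  have hkerβ : LinearMap.ker β = LinearMap.range α := by
    ext t
    obtain ⟨⟨v, u⟩, rfl⟩ := Submodule.Quotient.mk_surjective Sm t
    constructor
    · intro ht
      have hv : v ∈ Jr := by
        have h0 : Jr.mkQ v = 0 := ht
        rwa [Submodule.mkQ_apply, Submodule.Quotient.mk_eq_zero] at h0
      obtain ⟨x, hx⟩ := hv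
      refine ⟨u + μ x, ?_⟩
      rw [hα, Submodule.Quotient.eq]
      refine ⟨-x, ?_⟩
      show (j (-x), -μ (-x)) = ((0 : ↥A), u + μ x) - (v, u)
      rw [map_neg, map_neg, neg_neg, hx]
      show (-v, μ x) = (0 - v, u + μ x - u)
      exact Prod.ext (zero_sub v).symm (by rw [add_sub_cancel_left])
    · rintro ⟨u0, hu0⟩
      rw [LinearMap.mem_ker, ← hu0, hα, hβ, map_zero]
  -- P' is an extension of W by A, hence lies in ℬ
  let γ : ↥A →ₗ[R] P' := Sm.mkQ ∘ₗ LinearMap.inl R ↥A X'T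
  have hγ : ∀ v : ↥A, γ v = Submodule.Quotient.mk (v, (0 : X'T)) := fun v => rfl
  have hJrw : Jr ≤ LinearMap.ker w := by
    rintro v ⟨x, rfl⟩
    show w (a (i x)) = 0
    have : a (i x) ∈ LinearMap.ker w := by rw [hkw]; exact ⟨i x, rfl⟩
    exact this
  let τw : X'T →ₗ[R] ↥W := Submodule.liftQ Jr w hJrw
  have hτw : ∀ v : ↥A, τw (Jr.mkQ v) = w v := fun v => rfl
  let δ : P' →ₗ[R] ↥W := Submodule.liftQ Sm (τw ∘ₗ LinearMap.snd R ↥A X'T)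
    (by
      rintro ⟨v, u⟩ hvu
      obtain ⟨x, hx⟩ := hvu
      obtain ⟨y, rfl⟩ := hp x
      have hu : -μ (p y) = u := congrArg Prod.snd hx
      show τw u = 0
      rw [← hu, map_neg, hμ y]
      show -τw (Jr.mkQ (a y)) = 0
      rw [hτw]
      have hay : w (a y) = 0 := by
        have : a y ∈ LinearMap.ker w := by rw [hkw]; exact ⟨y, rfl⟩
        exact this
      rw [hay, neg_zero])
  have hδ : ∀ (v : ↥A) (u : X'T),
      δ (Submodule.Quotient.mk (v, u)) = τw u := fun v u => rfl
  have hγinj : Function.Injective γ := by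
    intro v₁ v₂ h
    have hd : (v₁, (0 : X'T)) - (v₂, (0 : X'T)) ∈ Sm := by
      rw [← Submodule.Quotient.eq, ← hγ, ← hγ]; exact h
    obtain ⟨x, hx⟩ := hd
    have h2 : -μ x = 0 := by
      have := congrArg Prod.snd hx
      simpa using this
    have hx0 : x = 0 := hμinj (by rw [show μ x = 0 by rw [← neg_neg (μ x), h2, neg_zero], map_zero])
    have h1' : j x = v₁ - v₂ := by
      have := congrArg Prod.fst hx
      simpa using this
    rw [hx0, map_zero, eq_comm, sub_eq_zero] at h1'
    exact h1'
  have hδsurj : Function.Surjective δ := by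
    intro w₀
    obtain ⟨v, rfl⟩ := hw w₀
    exact ⟨Submodule.Quotient.mk ((0 : ↥A), Jr.mkQ v), by rw [hδ, hτw]⟩
  have hkerδ : LinearMap.ker δ = LinearMap.range γ := by
    ext t
    obtain ⟨⟨v, u⟩, rfl⟩ := Submodule.Quotient.mk_surjective Sm t
    constructor
    · intro ht
      have hτu : τw u = 0 := ht
      obtain ⟨v', rfl⟩ := Submodule.Quotient.mk_surjective Jr u
      have hwv' : w v' = 0 := by rw [← hτw v']; exact hτu
      have : v' ∈ LinearMap.ker w := hwv'
      rw [hkw] at this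
      obtain ⟨y, hy⟩ := this
      refine ⟨v + j (p y), ?_⟩
      rw [hγ, Submodule.Quotient.eq]
      refine ⟨p y, ?_⟩
      have hu : μ (p y) = Submodule.Quotient.mk v' := by
        rw [hμ]
        show Jr.mkQ (a y) = _
        rw [hy]
        rfl
      show (j (p y), -μ (p y)) = (v + j (p y), (0 : X'T)) - (v, Submodule.Quotient.mk v')
      rw [hu]
      show (j (p y), -(Submodule.Quotient.mk v' : X'T)) =
        (v + j (p y) - v, 0 - Submodule.Quotient.mk v')
      exact Prod.ext (by rw [add_sub_cancel_left]) (by rw [zero_sub])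
    · rintro ⟨v₀, hv₀⟩
      rw [LinearMap.mem_ker, ← hv₀, hγ, hδ, map_zero]
  have hBP' : ℬ P' := hBext ↥A P' ↥W γ δ hγinj hδsurj hkerδ (hAB ↥A hA) hW
  exact ⟨⟨A, ModuleCat.of R X'T, j, Jr.mkQ, hA, hj,
    Submodule.Quotient.mk_surjective Jr,
    by rw [Submodule.ker_mkQ],
    ⟨ModuleCat.of R P', α, β, hBP', hαinj, hβsurj, hkerβ⟩⟩⟩

/-- Step S4: pullback step producing a `ℬ`-periodic kernel. -/
lemma periodic_quot_step
    (hAB : ∀ (M : Type u) [AddCommGroup M] [Module R M], 𝒜 M → ℬ M)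
    (hBext : ∀ (A B C : Type u) [AddCommGroup A] [Module R A] [AddCommGroup B] [Module R B]
      [AddCommGroup C] [Module R C] (i : A →ₗ[R] B) (p : B →ₗ[R] C),
      Function.Injective i → Function.Surjective p →
      LinearMap.ker p = LinearMap.range i → ℬ A → ℬ C → ℬ B)
    (h1 : ∀ C : Cx R, Acyclic R C → (∀ n : ℤ, 𝒜 (C.X n)) → ∀ n : ℤ, ℬ (cycles R C n))
    (hcycle : ∀ (M : Type u) [AddCommGroup M] [Module R M], ℬ M →
      ∃ C : Cx R, Acyclic R C ∧ (∀ n : ℤ, 𝒜 (C.X n)) ∧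
        ∃ n : ℤ, Nonempty (M ≃ₗ[R] cycles R C n))
    (X : ModuleCat.{u} R) (hX : IsPeriodic R ℬ ↥X) :
    Nonempty (PeriodicCores R 𝒜 ℬ X) := by
  obtain ⟨P, i, p, hP, hi, hp, hker⟩ := hX
  obtain ⟨A, K, k, q, hA, hK, hk, hq, hkq⟩ := quot_step h1 hcycle ↥P hP
  let r : ↥A →ₗ[R] ↥X := p ∘ₗ q
  have hr : Function.Surjective r := hp.comp hq
  let Ys : Submodule R ↥A := LinearMap.ker r
  have hmemrange : ∀ u : ↥Ys, q ↑u ∈ LinearMap.range i := fun u => by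
    rw [← hker]
    exact LinearMap.mem_ker.mpr u.2
  let eX : ↥X ≃ₗ[R] ↥(LinearMap.range i) := LinearEquiv.ofInjective i hi
  let θ : ↥Ys →ₗ[R] ↥X := eX.symm.toLinearMap ∘ₗ
    LinearMap.codRestrict (LinearMap.range i) (q ∘ₗ Ys.subtype) hmemrange
  have hiθ : ∀ u : ↥Ys, i (θ u) = q ↑u := fun u => by
    have h1' : eX (θ u) = ⟨q ↑u, hmemrange u⟩ := by
      show eX (eX.symm _) = _
      rw [LinearEquiv.apply_symm_apply]
      rfl
    have h2 := congrArg Subtype.val h1'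
    rwa [LinearEquiv.ofInjective_apply] at h2
  have hθsurj : Function.Surjective θ := by
    intro y
    obtain ⟨v, hv⟩ := hq (i y)
    have hpiy : p (i y) = 0 := by
      have : i y ∈ LinearMap.ker p := by rw [hker]; exact ⟨y, rfl⟩
      exact this
    have hvr : v ∈ Ys := by
      show p (q v) = 0
      rw [hv]
      exact hpiy
    refine ⟨⟨v, hvr⟩, hi ?_⟩
    rw [hiθ]
    exact hv
  have hθker : ∀ u : ↥Ys, θ u = 0 ↔ q ↑u = 0 := fun u => by
    constructor
    · intro h
      rw [← hiθ, h, map_zero]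
    · intro h
      apply hi
      rw [hiθ, h, map_zero]
  -- the pullback
  let φ : (↥A × ↥Ys) →ₗ[R] ↥X :=
    (r ∘ₗ LinearMap.fst R ↥A ↥Ys) - (θ ∘ₗ LinearMap.snd R ↥A ↥Ys)
  let Qs : Submodule R (↥A × ↥Ys) := LinearMap.ker φ
  have hQmem : ∀ (v : ↥A) (u : ↥Ys), (v, u) ∈ Qs ↔ r v = θ u := fun v u => by
    show φ (v, u) = 0 ↔ _
    rw [LinearMap.sub_apply, sub_eq_zero]
    rfl
  let α' : ↥Ys →ₗ[R] ↥Qs := LinearMap.codRestrict Qs ((LinearMap.inl R ↥A ↥Ys) ∘ₗ Ys.subtype)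
    (fun u => show ((↑u : ↥A), (0 : ↥Ys)) ∈ Qs from
      (hQmem (↑u) 0).mpr (by rw [map_zero]; exact u.2))
  let π₂ : ↥Qs →ₗ[R] ↥Ys := (LinearMap.snd R ↥A ↥Ys) ∘ₗ Qs.subtype
  have hα'inj : Function.Injective α' := by
    intro u₁ u₂ h
    have := congrArg (fun t : ↥Qs => (t.val).1) h
    exact Subtype.coe_injective this
  have hπ₂surj : Function.Surjective π₂ := by
    intro u
    obtain ⟨v, hv⟩ := hr (θ u)
    exact ⟨⟨(v, u), (hQmem v u).mpr hv⟩, rfl⟩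
  have hkerπ₂ : LinearMap.ker π₂ = LinearMap.range α' := by
    ext t
    constructor
    · intro ht
      obtain ⟨⟨v, u⟩, hvu⟩ := t
      have hu : u = 0 := ht
      subst hu
      have hvY : v ∈ Ys := by
        have h0 := (hQmem v 0).mp hvu
        rw [map_zero] at h0
        exact h0
      exact ⟨⟨v, hvY⟩, Subtype.ext rfl⟩
    · rintro ⟨u, rfl⟩
      show ((α' u : ↥A × ↥Ys)).2 = 0
      rfl
  -- Qs is an extension of A by K, hence lies in ℬ
  let π₁ : ↥Qs →ₗ[R] ↥A := (LinearMap.fst R ↥A ↥Ys) ∘ₗ Qs.subtype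
  have hπ₁surj : Function.Surjective π₁ := by
    intro v
    obtain ⟨u, hu⟩ := hθsurj (r v)
    exact ⟨⟨(v, u), (hQmem v u).mpr hu.symm⟩, rfl⟩
  have hqkc : ∀ c : ↥K, q (k c) = 0 := fun c => by
    have : k c ∈ LinearMap.ker q := by rw [hkq]; exact ⟨c, rfl⟩
    exact this
  have hkc : ∀ c : ↥K, k c ∈ Ys := fun c => by
    show p (q (k c)) = 0
    rw [hqkc c, map_zero]
  let κ : ↥K →ₗ[R] ↥Qs := LinearMap.codRestrict Qs
    ((LinearMap.inr R ↥A ↥Ys) ∘ₗ (LinearMap.codRestrict Ys k hkc)) (fun c =>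
      show ((0 : ↥A), (⟨k c, hkc c⟩ : ↥Ys)) ∈ Qs from
      (hQmem 0 ⟨k c, hkc c⟩).mpr (by
        rw [map_zero]
        exact ((hθker ⟨k c, hkc c⟩).mpr (hqkc c)).symm))
  have hκinj : Function.Injective κ := by
    intro c₁ c₂ h
    have := congrArg (fun t : ↥Qs => ((t.val).2 : ↥A)) h
    exact hk this
  have hkerπ₁ : LinearMap.ker π₁ = LinearMap.range κ := by
    ext t
    constructor
    · intro ht
      obtain ⟨⟨v, u⟩, hvu⟩ := t
      have hv : v = 0 := ht
      subst hv
      have hθu : θ u = 0 := by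
        have h0 := (hQmem 0 u).mp hvu
        rw [map_zero] at h0
        exact h0.symm
      have hqu : q ↑u = 0 := (hθker u).mp hθu
      have : ↑u ∈ LinearMap.range k := by rw [← hkq]; exact LinearMap.mem_ker.mpr hqu
      obtain ⟨c, hc⟩ := this
      exact ⟨c, Subtype.ext (Prod.ext rfl (Subtype.ext hc))⟩
    · rintro ⟨c, rfl⟩
      show ((κ c : ↥A × ↥Ys)).1 = 0
      rfl
  have hBQ : ℬ ↥Qs := hBext ↥K ↥Qs ↥A κ π₁ hκinj hπ₁surj hkerπ₁ hK (hAB ↥A hA)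
  exact ⟨⟨A, ModuleCat.of R ↥Ys, Ys.subtype, r, hA, Subtype.coe_injective, hr,
    by rw [Submodule.range_subtype],
    ⟨ModuleCat.of R ↥Qs, α', π₂, hBQ, hα'inj, hπ₂surj, hkerπ₂⟩⟩⟩

/-- The right tower of iterated pushout steps. -/
noncomputable def towerR
    (step : ∀ X : ModuleCat.{u} R, IsPeriodic R ℬ ↥X → PeriodicRes R 𝒜 ℬ X)
    (M0 : ModuleCat.{u} R) (h0 : IsPeriodic R ℬ ↥M0) :
    ℕ → Σ' X : ModuleCat.{u} R, IsPeriodic R ℬ ↥X := fun n =>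
  Nat.rec ⟨M0, h0⟩ (fun _ prev => ⟨(step prev.1 prev.2).X', (step prev.1 prev.2).hper⟩) n

/-- The left tower of iterated pullback steps. -/
noncomputable def towerL
    (step : ∀ X : ModuleCat.{u} R, IsPeriodic R ℬ ↥X → PeriodicCores R 𝒜 ℬ X)
    (M0 : ModuleCat.{u} R) (h0 : IsPeriodic R ℬ ↥M0) :
    ℕ → Σ' X : ModuleCat.{u} R, IsPeriodic R ℬ ↥X := fun n =>
  Nat.rec ⟨M0, h0⟩ (fun _ prev => ⟨(step prev.1 prev.2).Y', (step prev.1 prev.2).hper⟩) n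

/-- The bridge: statement (1) implies statement (4). -/
lemma bridge
    (hBiso : ∀ (M N : Type u) [AddCommGroup M] [Module R M] [AddCommGroup N] [Module R N],
      (M ≃ₗ[R] N) → ℬ M → ℬ N)
    (hAB : ∀ (M : Type u) [AddCommGroup M] [Module R M], 𝒜 M → ℬ M)
    (hBsummand : ∀ (M N : Type u) [AddCommGroup M] [Module R M] [AddCommGroup N]
      [Module R N] (i : N →ₗ[R] M) (r : M →ₗ[R] N),
      (∀ x : N, r (i x) = x) → ℬ M → ℬ N)
    (hBext : ∀ (A B C : Type u) [AddCommGroup A] [Module R A] [AddCommGroup B] [Module R B]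
      [AddCommGroup C] [Module R C] (i : A →ₗ[R] B) (p : B →ₗ[R] C),
      Function.Injective i → Function.Surjective p →
      LinearMap.ker p = LinearMap.range i → ℬ A → ℬ C → ℬ B)
    (hAsum : ∀ (ι : Type u) (M : ι → Type u) [∀ i, AddCommGroup (M i)]
      [∀ i, Module R (M i)], (∀ i, 𝒜 (M i)) → 𝒜 (DirectSum ι M))
    (hcycle : ∀ (M : Type u) [AddCommGroup M] [Module R M], ℬ M →
      ∃ C : Cx R, Acyclic R C ∧ (∀ n : ℤ, 𝒜 (C.X n)) ∧
        ∃ n : ℤ, Nonempty (M ≃ₗ[R] cycles R C n))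
    (h1 : ∀ C : Cx R, Acyclic R C → (∀ n : ℤ, 𝒜 (C.X n)) → ∀ n : ℤ, ℬ (cycles R C n))
    (M : Type u) [AddCommGroup M] [Module R M] (hM : IsPeriodic R ℬ M) : ℬ M := by
  classical
  have h3 : ∀ (N : Type u) [AddCommGroup N] [Module R N], IsPeriodic R 𝒜 N → ℬ N :=
    fun N _ _ hN => periodic_mem_of_cycles hBiso 𝒜 h1 N hN
  let stepR : ∀ X : ModuleCat.{u} R, IsPeriodic R ℬ ↥X → PeriodicRes R 𝒜 ℬ X :=
    fun X hX => Classical.choice (periodic_embed_step hAB hBext h1 hcycle X hX)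
  let stepL : ∀ X : ModuleCat.{u} R, IsPeriodic R ℬ ↥X → PeriodicCores R 𝒜 ℬ X :=
    fun X hX => Classical.choice (periodic_quot_step hAB hBext h1 hcycle X hX)
  let Mc : ModuleCat.{u} R := ModuleCat.of R M
  have hMc : IsPeriodic R ℬ ↥Mc := hM
  let XT : ℕ → Σ' X : ModuleCat.{u} R, IsPeriodic R ℬ ↥X := towerR stepR Mc hMc
  let YT : ℕ → Σ' X : ModuleCat.{u} R, IsPeriodic R ℬ ↥X := towerL stepL Mc hMc
  let ι : Type u := ULift.{u} ℕ ⊕ ULift.{u} ℕ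
  let Sm : ι → ModuleCat.{u} R := fun i => match i with
    | .inl k => (XT k.down).1
    | .inr k => (YT (k.down + 1)).1
  let Tm : ι → ModuleCat.{u} R := fun i => match i with
    | .inl k => (stepR (XT k.down).1 (XT k.down).2).A
    | .inr k => (stepL (YT k.down).1 (YT k.down).2).A
  let Um : ι → ModuleCat.{u} R := fun i => match i with
    | .inl k => (XT (k.down + 1)).1
    | .inr k => (YT k.down).1
  let S : ι → Type u := fun i => ↥(Sm i)
  let T : ι → Type u := fun i => ↥(Tm i)
  let U : ι → Type u := fun i => ↥(Um i)
  let f : ∀ i, S i →ₗ[R] T i := fun i => match i with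
    | .inl k => (stepR (XT k.down).1 (XT k.down).2).f
    | .inr k => (stepL (YT k.down).1 (YT k.down).2).f
  let g : ∀ i, T i →ₗ[R] U i := fun i => match i with
    | .inl k => (stepR (XT k.down).1 (XT k.down).2).g
    | .inr k => (stepL (YT k.down).1 (YT k.down).2).g
  have hfI : ∀ i, Function.Injective (f i) := by
    rintro (k | k)
    · exact (stepR (XT k.down).1 (XT k.down).2).hf
    · exact (stepL (YT k.down).1 (YT k.down).2).hf
  have hgS : ∀ i, Function.Surjective (g i) := by
    rintro (k | k)
    · exact (stepR (XT k.down).1 (XT k.down).2).hg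
    · exact (stepL (YT k.down).1 (YT k.down).2).hg
  have hks : ∀ i, LinearMap.ker (g i) = LinearMap.range (f i) := by
    rintro (k | k)
    · exact (stepR (XT k.down).1 (XT k.down).2).hker
    · exact (stepL (YT k.down).1 (YT k.down).2).hker
  obtain ⟨F, G, hF, hG, hFG⟩ := directSum_ses S T U f g hfI hgS hks
  let τ : ι ≃ ι :=
    { toFun := fun i => match i with
        | .inl k => .inl ⟨k.down + 1⟩
        | .inr ⟨0⟩ => .inl ⟨0⟩
        | .inr ⟨j+1⟩ => .inr ⟨j⟩
      invFun := fun i => match i with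
        | .inl ⟨0⟩ => .inr ⟨0⟩
        | .inl ⟨j+1⟩ => .inl ⟨j⟩
        | .inr k => .inr ⟨k.down + 1⟩
      left_inv := by rintro (⟨j⟩ | ⟨(_ | j)⟩) <;> rfl
      right_inv := by rintro (⟨(_ | j)⟩ | ⟨j⟩) <;> rfl }
  have χ : ∀ k : ι, U (τ.symm k) ≃ₗ[R] S k := by
    rintro (⟨(_ | j)⟩ | ⟨j⟩)
    · exact LinearEquiv.refl R ↥Mc
    · exact LinearEquiv.refl R _
    · exact LinearEquiv.refl R _
  let e : DirectSum ι U ≃ₗ[R] DirectSum ι S :=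
    (DirectSum.lequivCongrLeft R τ).trans (DFinsupp.mapRange.linearEquiv χ)
  have hperS : IsPeriodic R 𝒜 (DirectSum ι S) := by
    refine ⟨ModuleCat.of R (DirectSum ι T), F, e.toLinearMap.comp G, ?_, hF,
      e.surjective.comp hG, ?_⟩
    · refine hAsum ι T ?_
      rintro (k | k)
      · exact (stepR (XT k.down).1 (XT k.down).2).hA
      · exact (stepL (YT k.down).1 (YT k.down).2).hA
    · rw [← hFG]
      ext x
      simp [LinearMap.mem_ker, LinearMap.comp_apply,
        (map_eq_zero_iff _ e.injective : e (G x) = 0 ↔ G x = 0)]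
  have hBS : ℬ (DirectSum ι S) := h3 _ hperS
  exact hBsummand (DirectSum ι S) M (DirectSum.lof R ι S (.inl ⟨0⟩))
    (DirectSum.component R ι S (.inl ⟨0⟩))
    (fun x => DirectSum.component.lof_self (ι := ι) (M := S) R (.inl ⟨0⟩) x) hBS

end BridgeAux

theorem statement1 (R : Type u) [Ring R]
    (𝒜 ℬ : (M : Type u) → [AddCommGroup M] → [Module R M] → Prop)
    (hAiso : ∀ (M N : Type u) [AddCommGroup M] [Module R M] [AddCommGroup N] [Module R N],
      (M ≃ₗ[R] N) → 𝒜 M → 𝒜 N)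
    (hBiso : ∀ (M N : Type u) [AddCommGroup M] [Module R M] [AddCommGroup N] [Module R N],
      (M ≃ₗ[R] N) → ℬ M → ℬ N)
    (hAB : ∀ (M : Type u) [AddCommGroup M] [Module R M], 𝒜 M → ℬ M)
    (hBsummand : ∀ (M N : Type u) [AddCommGroup M] [Module R M] [AddCommGroup N]
      [Module R N] (i : N →ₗ[R] M) (r : M →ₗ[R] N),
      (∀ x : N, r (i x) = x) → ℬ M → ℬ N)
    (hBext : ∀ (A B C : Type u) [AddCommGroup A] [Module R A] [AddCommGroup B] [Module R B]
      [AddCommGroup C] [Module R C] (i : A →ₗ[R] B) (p : B →ₗ[R] C),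
      Function.Injective i → Function.Surjective p →
      LinearMap.ker p = LinearMap.range i → ℬ A → ℬ C → ℬ B)
    (hAsum : ∀ (ι : Type u) (M : ι → Type u) [∀ i, AddCommGroup (M i)]
      [∀ i, Module R (M i)], (∀ i, 𝒜 (M i)) → 𝒜 (DirectSum ι M))
    (hBsum : ∀ (ι : Type u) (M : ι → Type u) [∀ i, AddCommGroup (M i)]
      [∀ i, Module R (M i)], (∀ i, ℬ (M i)) → ℬ (DirectSum ι M))
    (hcycle : ∀ (M : Type u) [AddCommGroup M] [Module R M], ℬ M →
      ∃ C : Cx R, Acyclic R C ∧ (∀ n : ℤ, 𝒜 (C.X n)) ∧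
        ∃ n : ℤ, Nonempty (M ≃ₗ[R] cycles R C n)) :
    List.TFAE
      [∀ C : Cx R, Acyclic R C → (∀ n : ℤ, 𝒜 (C.X n)) → ∀ n : ℤ, ℬ (cycles R C n),
       ∀ C : Cx R, Acyclic R C → (∀ n : ℤ, ℬ (C.X n)) → ∀ n : ℤ, ℬ (cycles R C n),
       ∀ (M : Type u) [AddCommGroup M] [Module R M], IsPeriodic R 𝒜 M → ℬ M,
       ∀ (M : Type u) [AddCommGroup M] [Module R M], IsPeriodic R ℬ M → ℬ M] := by
  tfae_have 1 → 3
  | h1, M, _, _, hM => periodic_mem_of_cycles hBiso 𝒜 h1 M hM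
  tfae_have 2 → 4
  | h2, M, _, _, hM => periodic_mem_of_cycles hBiso ℬ h2 M hM
  tfae_have 3 → 1
  | h3, C, hC, hcomp, n => cycles_mem_of_periodic hBsummand 𝒜 hAsum h3 C hC hcomp n
  tfae_have 4 → 2
  | h4, C, hC, hcomp, n => cycles_mem_of_periodic hBsummand ℬ hBsum h4 C hC hcomp n
  tfae_have 4 → 3
  | h4, M, _, _, hM => by
    obtain ⟨A, i, p, hA, hi, hp, hker⟩ := hM
    exact h4 M ⟨A, i, p, hAB _ hA, hi, hp, hker⟩
  tfae_have 1 → 4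
  | h1, M, _, _, hM =>
    bridge hBiso hAB hBsummand hBext hAsum hcycle h1 M hM
  tfae_finish

end TotallyAcyclicPaper
end
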